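/- For all integers K, N, M and real ε with 1 < K ≤ N, M > 0 and ε > 0, there exists a (K, ε)-extractor E : Fin N × Fin D → Fin M with left degree D = ⌈max{ (M/K)·(ln 2)/ε², (1/ε²)·(ln(N/K) + 1) }⌉. -/

import Mathlib

open Finset

/-- `edgeCount E S Y` is the number of edges between `S` and `Y` in the
bipartite multigraph given by `E : Fin N × Fin D → Fin M`, i.e. the number of
pairs `(x, i)` with `x ∈ S` and `E (x, i) ∈ Y`. -/
def edgeCount {N D M : ℕ} (E : Fin N × Fin D → Fin M)
    (S : Finset (Fin N)) (Y : Finset (Fin M)) : ℕ :=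
  ((S ×ˢ (univ : Finset (Fin D))).filter (fun p => E p ∈ Y)).card

/-- `E` is a `(K, ε)`-extractor: for every set `S` of at least `K` left
vertices and every set `Y` of right vertices,
`|#E(S,Y)/(D·#S) − #Y/M| < ε`. -/
def IsExtractor {N D M : ℕ} (E : Fin N × Fin D → Fin M) (K : ℕ) (ε : ℝ) : Prop :=
  ∀ (S : Finset (Fin N)) (Y : Finset (Fin M)), K ≤ S.card →
    |(edgeCount E S Y : ℝ) / (D * S.card) - (Y.card : ℝ) / M| < ε


lemma phi_pos {p : ℝ} (hp0 : 0 ≤ p) (hp1 : p ≤ 1) (t : ℝ) :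
    0 < 1 - p + p * Real.exp t := by
  rcases eq_or_lt_of_le hp0 with h | h
  · simp [← h]
  · nlinarith [Real.exp_pos t, mul_pos h (Real.exp_pos t)]

lemma hoeffding_bernoulli {p : ℝ} (hp0 : 0 ≤ p) (hp1 : p ≤ 1) (t : ℝ) :
    1 - p + p * Real.exp t ≤ Real.exp (t * p + t ^ 2 / 8) := by
  have hφ : ∀ s : ℝ, 0 < 1 - p + p * Real.exp s := phi_pos hp0 hp1
  set h : ℝ → ℝ := fun s => s * p + s ^ 2 / 8 - Real.log (1 - p + p * Real.exp s) with hh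
  set f : ℝ → ℝ := fun s => p + s / 4 - p * Real.exp s / (1 - p + p * Real.exp s) with hf
  have h1 : ∀ s : ℝ, HasDerivAt (fun s : ℝ => 1 - p + p * Real.exp s) (p * Real.exp s) s := by
    intro s
    simpa using ((Real.hasDerivAt_exp s).const_mul p).const_add (1 - p)
  have hder : ∀ s, HasDerivAt h (f s) s := by
    intro s
    have h2 : HasDerivAt (fun s : ℝ => Real.log (1 - p + p * Real.exp s))
        (p * Real.exp s / (1 - p + p * Real.exp s)) s := (h1 s).log (hφ s).ne'
    have h3 : HasDerivAt (fun s : ℝ => s * p + s ^ 2 / 8) (p + s / 4) s := by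
      have := ((hasDerivAt_pow 2 s).div_const 8)
      have h4 := (hasDerivAt_id s).mul_const p
      have h5 := h4.add this
      exact h5.congr_deriv (by push_cast; ring)
    exact h3.sub h2
  have hderf : ∀ s, HasDerivAt f
      (1 / 4 - p * Real.exp s * (1 - p) / (1 - p + p * Real.exp s) ^ 2) s := by
    intro s
    have h5 : HasDerivAt (fun s : ℝ => p * Real.exp s) (p * Real.exp s) s :=
      (Real.hasDerivAt_exp s).const_mul p
    have h6 : HasDerivAt (fun s : ℝ => p * Real.exp s / (1 - p + p * Real.exp s))
        ((p * Real.exp s * (1 - p + p * Real.exp s) - p * Real.exp s * (p * Real.exp s)) /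
          (1 - p + p * Real.exp s) ^ 2) s := h5.div (h1 s) (hφ s).ne'
    have h7 : HasDerivAt (fun s : ℝ => p + s / 4) (1 / 4) s := by
      simpa using ((hasDerivAt_id s).div_const 4).const_add p
    have h8 := h7.sub h6
    have heq : p * Real.exp s * (1 - p + p * Real.exp s) - p * Real.exp s * (p * Real.exp s)
        = p * Real.exp s * (1 - p) := by ring
    rw [heq] at h8
    exact h8
  have hfmono : Monotone f := by
    apply monotone_of_deriv_nonneg (fun s => (hderf s).differentiableAt)
    intro s
    rw [(hderf s).deriv]
    have hb := hφ s
    have he := (Real.exp_pos s).le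
    have hnum : p * Real.exp s * (1 - p) * 4 ≤ (1 - p + p * Real.exp s) ^ 2 := by
      nlinarith [sq_nonneg (1 - p - p * Real.exp s)]
    have : p * Real.exp s * (1 - p) / (1 - p + p * Real.exp s) ^ 2 ≤ 1 / 4 := by
      rw [div_le_div_iff₀ (by positivity) (by norm_num)]
      linarith
    linarith
  have hf0 : f 0 = 0 := by simp [hf]
  have hmain : ∀ t : ℝ, 0 ≤ h t := by
    intro t
    have h0 : h 0 = 0 := by simp [hh]
    rcases le_total 0 t with ht | ht
    · have : MonotoneOn h (Set.Ici 0) := by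
        apply monotoneOn_of_deriv_nonneg (convex_Ici 0)
          (fun s _ => (hder s).differentiableAt.continuousAt.continuousWithinAt)
          (fun s _ => (hder s).differentiableAt.differentiableWithinAt)
        intro s hs
        rw [(hder s).deriv]
        rw [interior_Ici] at hs
        calc (0 : ℝ) = f 0 := hf0.symm
          _ ≤ f s := hfmono (le_of_lt hs)
      have := this (Set.self_mem_Ici) (Set.mem_Ici.2 ht) ht
      linarith [h0 ▸ this]
    · have : AntitoneOn h (Set.Iic 0) := by
        apply antitoneOn_of_deriv_nonpos (convex_Iic 0)
          (fun s _ => (hder s).differentiableAt.continuousAt.continuousWithinAt)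
          (fun s _ => (hder s).differentiableAt.differentiableWithinAt)
        intro s hs
        rw [(hder s).deriv]
        rw [interior_Iic] at hs
        calc f s ≤ f 0 := hfmono (le_of_lt hs)
          _ = 0 := hf0
      have := this (Set.mem_Iic.2 ht) (Set.self_mem_Iic) ht
      linarith [h0 ▸ this]
  have := hmain t
  have hlog : Real.log (1 - p + p * Real.exp t) ≤ t * p + t ^ 2 / 8 := by
    simp only [hh] at this; linarith
  exact (Real.log_le_iff_le_exp (hφ t)).1 hlog

lemma sum_exp_edgeCount {N D M : ℕ} (S : Finset (Fin N)) (Y : Finset (Fin M)) (t : ℝ) :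
    ∑ E : Fin N × Fin D → Fin M, Real.exp (t * (edgeCount E S Y : ℝ))
      = (((M : ℝ) - Y.card) + Y.card * Real.exp t) ^ (S.card * D)
          * (M : ℝ) ^ (N * D - S.card * D) := by
  classical
  set A : Finset (Fin N × Fin D) := S ×ˢ (univ : Finset (Fin D)) with hA
  have hcardA : A.card = S.card * D := by simp [hA]
  have step1 : ∀ E : Fin N × Fin D → Fin M,
      Real.exp (t * (edgeCount E S Y : ℝ))
        = ∏ a : Fin N × Fin D, (if a ∈ A ∧ E a ∈ Y then Real.exp t else 1) := by
    intro E
    have h1 : edgeCount E S Y = (univ.filter (fun a => a ∈ A ∧ E a ∈ Y)).card := by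
      unfold edgeCount
      congr 1
      ext a
      simp [hA, and_comm]
    rw [h1, Finset.prod_ite, Finset.prod_const, Finset.prod_const, one_pow, mul_one,
      mul_comm t, Real.exp_nat_mul]
  rw [Finset.sum_congr rfl (fun E _ => step1 E)]
  rw [← Fintype.prod_sum (fun (a : Fin N × Fin D) (v : Fin M) =>
    (if a ∈ A ∧ v ∈ Y then Real.exp t else 1))]
  have step2 : ∀ a : Fin N × Fin D,
      (∑ v : Fin M, (if a ∈ A ∧ v ∈ Y then Real.exp t else 1))
        = if a ∈ A then (((M : ℝ) - Y.card) + Y.card * Real.exp t) else (M : ℝ) := by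
    intro a
    by_cases ha : a ∈ A
    · simp only [ha, true_and, if_true]
      rw [Finset.sum_ite, Finset.sum_const, Finset.sum_const]
      have h2 : (univ.filter (fun v : Fin M => v ∈ Y)) = Y := by
        ext v; simp
      have h3 : (univ.filter (fun v : Fin M => v ∉ Y)).card = M - Y.card := by
        rw [Finset.filter_not, h2]
        simp [Finset.card_sdiff_of_subset (Finset.subset_univ Y)]
      rw [h2, h3]
      have hYM : Y.card ≤ M := by
        simpa using Finset.card_le_card (Finset.subset_univ Y)
      simp only [nsmul_eq_mul, mul_one, Nat.cast_sub hYM]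
      ring
    · simp [ha]
  rw [Finset.prod_congr rfl (fun a _ => step2 a)]
  rw [Finset.prod_ite, Finset.prod_const, Finset.prod_const]
  have h4 : univ.filter (fun a : Fin N × Fin D => a ∈ A) = A := by
    ext a; simp
  have h5 : (univ.filter (fun a : Fin N × Fin D => a ∉ A)).card = N * D - S.card * D := by
    rw [Finset.filter_not, h4]
    simp [Finset.card_sdiff_of_subset (Finset.subset_univ A), hcardA]
  rw [h4, h5, hcardA]

lemma count_upper_tail {N D M : ℕ} (hM : 0 < M) {ε : ℝ} (hε : 0 < ε)
    (S : Finset (Fin N)) (Y : Finset (Fin M)) :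
    ((univ.filter (fun E : Fin N × Fin D → Fin M =>
        ((S.card * D : ℕ) : ℝ) * ((Y.card : ℝ) / M + ε) ≤ (edgeCount E S Y : ℝ))).card : ℝ)
      ≤ Real.exp (-2 * ε ^ 2 * ((S.card * D : ℕ) : ℝ)) * (M : ℝ) ^ (N * D) := by
  classical
  set n : ℕ := S.card * D with hn
  set y : ℝ := (Y.card : ℝ) with hy
  have hy0 : 0 ≤ y := by positivity
  have hyM : y ≤ M := by
    have : Y.card ≤ M := by simpa using Finset.card_le_card (Finset.subset_univ Y)
    rw [hy]; exact_mod_cast this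
  have hMpos : (0 : ℝ) < M := by exact_mod_cast hM
  set p : ℝ := y / M with hp
  have hp0 : 0 ≤ p := by positivity
  have hp1 : p ≤ 1 := by rw [hp, div_le_one hMpos]; exact hyM
  set t : ℝ := 4 * ε with ht
  have htpos : 0 < t := by positivity
  set m : ℝ := (n : ℝ) * (p + ε) with hm
  -- Markov
  have markov : ((univ.filter (fun E : Fin N × Fin D → Fin M =>
      m ≤ (edgeCount E S Y : ℝ))).card : ℝ) * Real.exp (t * m)
        ≤ ∑ E : Fin N × Fin D → Fin M, Real.exp (t * (edgeCount E S Y : ℝ)) := by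
    have hcs : ((univ.filter (fun E : Fin N × Fin D → Fin M =>
        m ≤ (edgeCount E S Y : ℝ))).card : ℝ) * Real.exp (t * m)
          = ∑ _E ∈ univ.filter (fun E : Fin N × Fin D → Fin M =>
              m ≤ (edgeCount E S Y : ℝ)), Real.exp (t * m) := by
      rw [Finset.sum_const, nsmul_eq_mul]
    rw [hcs]
    calc ∑ E ∈ univ.filter (fun E : Fin N × Fin D → Fin M => m ≤ (edgeCount E S Y : ℝ)),
          Real.exp (t * m)
        ≤ ∑ E ∈ univ.filter (fun E : Fin N × Fin D → Fin M => m ≤ (edgeCount E S Y : ℝ)),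
          Real.exp (t * (edgeCount E S Y : ℝ)) := by
          apply Finset.sum_le_sum
          intro E hE
          rw [Finset.mem_filter] at hE
          exact Real.exp_le_exp.2 (mul_le_mul_of_nonneg_left hE.2 htpos.le)
      _ ≤ ∑ E : Fin N × Fin D → Fin M, Real.exp (t * (edgeCount E S Y : ℝ)) :=
          Finset.sum_le_sum_of_subset_of_nonneg (Finset.filter_subset _ _)
            (fun _ _ _ => (Real.exp_pos _).le)
  rw [sum_exp_edgeCount] at markov
  -- bound the mgf via Hoeffding
  have hbase : (0 : ℝ) ≤ ((M : ℝ) - y) + y * Real.exp t := by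
    nlinarith [Real.exp_pos t, mul_nonneg hy0 (Real.exp_pos t).le]
  have hhoeff : ((M : ℝ) - y) + y * Real.exp t ≤ (M : ℝ) * Real.exp (t * p + t ^ 2 / 8) := by
    have h := hoeffding_bernoulli hp0 hp1 t
    have h2 : (M : ℝ) * (1 - p + p * Real.exp t) ≤ (M : ℝ) * Real.exp (t * p + t ^ 2 / 8) :=
      mul_le_mul_of_nonneg_left h hMpos.le
    have h3 : (M : ℝ) * (1 - p + p * Real.exp t) = ((M : ℝ) - y) + y * Real.exp t := by
      rw [hp]
      field_simp
    linarith [h3 ▸ h2]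
  have hnND : n ≤ N * D := by
    apply Nat.mul_le_mul_right
    simpa using Finset.card_le_card (Finset.subset_univ S)
  have hpow : (((M : ℝ) - y) + y * Real.exp t) ^ n * (M : ℝ) ^ (N * D - n)
      ≤ Real.exp ((n : ℝ) * (t * p + t ^ 2 / 8)) * (M : ℝ) ^ (N * D) := by
    have h1 : (((M : ℝ) - y) + y * Real.exp t) ^ n
        ≤ ((M : ℝ) * Real.exp (t * p + t ^ 2 / 8)) ^ n := pow_le_pow_left₀ hbase hhoeff n
    have h2 : ((M : ℝ) * Real.exp (t * p + t ^ 2 / 8)) ^ n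
        = (M : ℝ) ^ n * Real.exp ((n : ℝ) * (t * p + t ^ 2 / 8)) := by
      rw [mul_pow, ← Real.exp_nat_mul]
    have h3 : (M : ℝ) ^ n * (M : ℝ) ^ (N * D - n) = (M : ℝ) ^ (N * D) := by
      rw [← pow_add, Nat.add_sub_cancel' hnND]
    calc (((M : ℝ) - y) + y * Real.exp t) ^ n * (M : ℝ) ^ (N * D - n)
        ≤ ((M : ℝ) * Real.exp (t * p + t ^ 2 / 8)) ^ n * (M : ℝ) ^ (N * D - n) := by
          apply mul_le_mul_of_nonneg_right h1 (by positivity)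
      _ = Real.exp ((n : ℝ) * (t * p + t ^ 2 / 8)) * ((M : ℝ) ^ n * (M : ℝ) ^ (N * D - n)) := by
          rw [h2]; ring
      _ = Real.exp ((n : ℝ) * (t * p + t ^ 2 / 8)) * (M : ℝ) ^ (N * D) := by rw [h3]
  have final : ((univ.filter (fun E : Fin N × Fin D → Fin M =>
      m ≤ (edgeCount E S Y : ℝ))).card : ℝ)
        ≤ Real.exp (-2 * ε ^ 2 * (n : ℝ)) * (M : ℝ) ^ (N * D) := by
    have hexp : (0 : ℝ) < Real.exp (t * m) := Real.exp_pos _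
    have h4 : ((univ.filter (fun E : Fin N × Fin D → Fin M =>
        m ≤ (edgeCount E S Y : ℝ))).card : ℝ) * Real.exp (t * m)
          ≤ Real.exp ((n : ℝ) * (t * p + t ^ 2 / 8)) * (M : ℝ) ^ (N * D) :=
      le_trans markov hpow
    have h5 : Real.exp ((n : ℝ) * (t * p + t ^ 2 / 8)) / Real.exp (t * m)
        = Real.exp (-2 * ε ^ 2 * (n : ℝ)) := by
      rw [← Real.exp_sub]
      congr 1
      rw [hm, ht]
      ring
    calc ((univ.filter (fun E : Fin N × Fin D → Fin M =>
            m ≤ (edgeCount E S Y : ℝ))).card : ℝ)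
        ≤ Real.exp ((n : ℝ) * (t * p + t ^ 2 / 8)) * (M : ℝ) ^ (N * D) / Real.exp (t * m) := by
          rw [le_div_iff₀ hexp]; exact h4
      _ = Real.exp ((n : ℝ) * (t * p + t ^ 2 / 8)) / Real.exp (t * m) * (M : ℝ) ^ (N * D) := by
          ring
      _ = Real.exp (-2 * ε ^ 2 * (n : ℝ)) * (M : ℝ) ^ (N * D) := by rw [h5]
  simpa [hm, hn, hp, hy] using final

lemma edgeCount_compl {N D M : ℕ} (E : Fin N × Fin D → Fin M)
    (S : Finset (Fin N)) (Y : Finset (Fin M)) :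
    edgeCount E S Yᶜ = S.card * D - edgeCount E S Y := by
  classical
  have key : edgeCount E S Y + edgeCount E S Yᶜ = S.card * D := by
    unfold edgeCount
    rw [show ((S ×ˢ (univ : Finset (Fin D))).filter fun p => E p ∈ Yᶜ)
        = ((S ×ˢ (univ : Finset (Fin D))).filter fun p => ¬ E p ∈ Y) from
      Finset.filter_congr (fun p _ => by simp)]
    rw [Finset.card_filter_add_card_filter_not]
    simp
  omega

lemma count_bad {N D M : ℕ} (hM : 0 < M) {ε : ℝ} (hε : 0 < ε)
    (S : Finset (Fin N)) (Y : Finset (Fin M)) (hS : 0 < S.card) (hD : 0 < D) :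
    ((univ.filter (fun E : Fin N × Fin D → Fin M =>
        ε ≤ |(edgeCount E S Y : ℝ) / ((D : ℝ) * S.card) - (Y.card : ℝ) / M|)).card : ℝ)
      ≤ 2 * Real.exp (-2 * ε ^ 2 * ((S.card * D : ℕ) : ℝ)) * (M : ℝ) ^ (N * D) := by
  classical
  have hn : (0 : ℝ) < ((S.card * D : ℕ) : ℝ) := by
    have : 0 < S.card * D := Nat.mul_pos hS hD
    exact_mod_cast this
  have hsub : (univ.filter (fun E : Fin N × Fin D → Fin M =>
      ε ≤ |(edgeCount E S Y : ℝ) / ((D : ℝ) * S.card) - (Y.card : ℝ) / M|))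
      ⊆ (univ.filter (fun E : Fin N × Fin D → Fin M =>
          ((S.card * D : ℕ) : ℝ) * ((Y.card : ℝ) / M + ε) ≤ (edgeCount E S Y : ℝ)))
        ∪ (univ.filter (fun E : Fin N × Fin D → Fin M =>
          ((S.card * D : ℕ) : ℝ) * (((Yᶜ : Finset (Fin M)).card : ℝ) / M + ε)
            ≤ (edgeCount E S Yᶜ : ℝ))) := by
    intro E hE
    rw [Finset.mem_filter] at hE
    have hdev := hE.2
    have hDS : ((D : ℝ) * S.card) = ((S.card * D : ℕ) : ℝ) := by push_cast; ring
    have hXle : (edgeCount E S Y : ℝ) ≤ ((S.card * D : ℕ) : ℝ) := by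
      have : edgeCount E S Y ≤ S.card * D := by
        unfold edgeCount
        calc ((S ×ˢ (univ : Finset (Fin D))).filter (fun p => E p ∈ Y)).card
            ≤ (S ×ˢ (univ : Finset (Fin D))).card := Finset.card_filter_le _ _
          _ = S.card * D := by simp
      exact_mod_cast this
    rw [Finset.mem_union, Finset.mem_filter, Finset.mem_filter]
    rcases abs_cases ((edgeCount E S Y : ℝ) / ((D : ℝ) * S.card) - (Y.card : ℝ) / M) with
      ⟨habs, _⟩ | ⟨habs, _⟩
    · left
      refine ⟨Finset.mem_univ _, ?_⟩
      rw [habs, hDS] at hdev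
      have h1 : (Y.card : ℝ) / M + ε
          ≤ (edgeCount E S Y : ℝ) / ((S.card * D : ℕ) : ℝ) := by linarith
      have h2 := (le_div_iff₀ hn).1 h1
      rw [mul_comm]
      exact h2
    · right
      refine ⟨Finset.mem_univ _, ?_⟩
      rw [habs] at hdev
      rw [hDS] at hdev
      have hYc : ((Yᶜ : Finset (Fin M)).card : ℝ) = (M : ℝ) - Y.card := by
        rw [Finset.card_compl]
        have : Y.card ≤ Fintype.card (Fin M) := Finset.card_le_univ Y
        push_cast [Nat.cast_sub this]
        simp
      have hXc : (edgeCount E S Yᶜ : ℝ) = ((S.card * D : ℕ) : ℝ) - edgeCount E S Y := by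
        rw [edgeCount_compl]
        have hle : edgeCount E S Y ≤ S.card * D := by
          have := hXle
          exact_mod_cast this
        push_cast [Nat.cast_sub hle]
        ring
      rw [hYc, hXc]
      have hMpos : (0 : ℝ) < M := by exact_mod_cast hM
      have hp : ((M : ℝ) - Y.card) / M = 1 - (Y.card : ℝ) / M := by
        field_simp
      rw [hp]
      have h1 : (edgeCount E S Y : ℝ) / ((S.card * D : ℕ) : ℝ)
          ≤ (Y.card : ℝ) / M - ε := by linarith
      have h2 := (div_le_iff₀ hn).1 h1
      nlinarith [h2]
  calc ((univ.filter (fun E : Fin N × Fin D → Fin M =>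
        ε ≤ |(edgeCount E S Y : ℝ) / ((D : ℝ) * S.card) - (Y.card : ℝ) / M|)).card : ℝ)
      ≤ (((univ.filter (fun E : Fin N × Fin D → Fin M =>
          ((S.card * D : ℕ) : ℝ) * ((Y.card : ℝ) / M + ε) ≤ (edgeCount E S Y : ℝ)))
        ∪ (univ.filter (fun E : Fin N × Fin D → Fin M =>
          ((S.card * D : ℕ) : ℝ) * (((Yᶜ : Finset (Fin M)).card : ℝ) / M + ε)
            ≤ (edgeCount E S Yᶜ : ℝ)))).card : ℝ) := by
        exact_mod_cast Finset.card_le_card hsub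
    _ ≤ ((univ.filter (fun E : Fin N × Fin D → Fin M =>
          ((S.card * D : ℕ) : ℝ) * ((Y.card : ℝ) / M + ε) ≤ (edgeCount E S Y : ℝ))).card : ℝ)
        + ((univ.filter (fun E : Fin N × Fin D → Fin M =>
          ((S.card * D : ℕ) : ℝ) * (((Yᶜ : Finset (Fin M)).card : ℝ) / M + ε)
            ≤ (edgeCount E S Yᶜ : ℝ))).card : ℝ) := by
        exact_mod_cast Finset.card_union_le _ _
    _ ≤ Real.exp (-2 * ε ^ 2 * ((S.card * D : ℕ) : ℝ)) * (M : ℝ) ^ (N * D)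
        + Real.exp (-2 * ε ^ 2 * ((S.card * D : ℕ) : ℝ)) * (M : ℝ) ^ (N * D) := by
        exact add_le_add (count_upper_tail hM hε S Y) (count_upper_tail hM hε S Yᶜ)
    _ = 2 * Real.exp (-2 * ε ^ 2 * ((S.card * D : ℕ) : ℝ)) * (M : ℝ) ^ (N * D) := by ring

lemma exists_good {N D M K : ℕ} (hM : 0 < M) {ε : ℝ} (hε : 0 < ε)
    (hK : 0 < K) (hD : 0 < D)
    (hbound : (N.choose K : ℝ) * 2 ^ M * Real.exp (-2 * ε ^ 2 * ((K * D : ℕ) : ℝ))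
        * (M : ℝ) ^ (N * D) < (M : ℝ) ^ (N * D)) :
    ∃ E : Fin N × Fin D → Fin M, ∀ S : Finset (Fin N), S.card = K →
      ∀ Y : Finset (Fin M),
        |(edgeCount E S Y : ℝ) / ((D : ℝ) * S.card) - (Y.card : ℝ) / M| < ε := by
  classical
  by_contra hcon
  push_neg at hcon
  -- every E is bad for some S of size K and some Y avoiding 0
  set z : Fin M := ⟨0, hM⟩ with hz
  have hcover : (univ : Finset (Fin N × Fin D → Fin M))
      ⊆ (powersetCard K (univ : Finset (Fin N))).biUnion (fun S =>
          ((univ.erase z).powerset).biUnion (fun Y =>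
            univ.filter (fun E : Fin N × Fin D → Fin M =>
              ε ≤ |(edgeCount E S Y : ℝ) / ((D : ℝ) * S.card) - (Y.card : ℝ) / M|))) := by
    intro E _
    obtain ⟨S, hScard, Y, hY⟩ := hcon E
    have hSmem : S ∈ powersetCard K (univ : Finset (Fin N)) := by
      rw [Finset.mem_powersetCard]
      exact ⟨Finset.subset_univ S, hScard⟩
    by_cases hzY : z ∈ Y
    · -- use the complement
      have hYc : Yᶜ ∈ (univ.erase z).powerset := by
        rw [Finset.mem_powerset]
        intro v hv
        rw [Finset.mem_compl] at hv
        rw [Finset.mem_erase]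
        exact ⟨fun h => hv (h ▸ hzY), Finset.mem_univ v⟩
      rw [Finset.mem_biUnion]
      refine ⟨S, hSmem, ?_⟩
      rw [Finset.mem_biUnion]
      refine ⟨Yᶜ, hYc, ?_⟩
      rw [Finset.mem_filter]
      refine ⟨Finset.mem_univ _, ?_⟩
      -- deviation for the complement is the same
      have hn : (0 : ℝ) < (D : ℝ) * S.card := by
        have h1 : (0:ℝ) < D := by exact_mod_cast hD
        have h2 : (0:ℝ) < (S.card : ℝ) := by
          have : 0 < S.card := hScard ▸ hK
          exact_mod_cast this
        positivity
      have hMpos : (0:ℝ) < M := by exact_mod_cast hM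
      have hXle : edgeCount E S Y ≤ S.card * D := by
        unfold edgeCount
        calc ((S ×ˢ (univ : Finset (Fin D))).filter (fun p => E p ∈ Y)).card
            ≤ (S ×ˢ (univ : Finset (Fin D))).card := Finset.card_filter_le _ _
          _ = S.card * D := by simp
      have hXc : (edgeCount E S Yᶜ : ℝ) = (S.card : ℝ) * D - edgeCount E S Y := by
        rw [edgeCount_compl]
        push_cast [Nat.cast_sub hXle]
        ring
      have hYcard : ((Yᶜ : Finset (Fin M)).card : ℝ) = (M : ℝ) - Y.card := by
        rw [Finset.card_compl]
        have : Y.card ≤ Fintype.card (Fin M) := Finset.card_le_univ Y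
        push_cast [Nat.cast_sub this]
        simp
      have heq : (edgeCount E S Yᶜ : ℝ) / ((D : ℝ) * S.card)
            - ((Yᶜ : Finset (Fin M)).card : ℝ) / M
          = -((edgeCount E S Y : ℝ) / ((D : ℝ) * S.card) - (Y.card : ℝ) / M) := by
        rw [hXc, hYcard]
        have hS0 : (S.card : ℝ) ≠ 0 := by rintro h; simp [h] at hn
        field_simp
        ring
      rw [heq, abs_neg]
      exact hY
    · rw [Finset.mem_biUnion]
      refine ⟨S, hSmem, ?_⟩
      rw [Finset.mem_biUnion]
      refine ⟨Y, ?_, ?_⟩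
      · rw [Finset.mem_powerset]
        intro v hv
        rw [Finset.mem_erase]
        exact ⟨fun h => hzY (h ▸ hv), Finset.mem_univ v⟩
      · rw [Finset.mem_filter]
        exact ⟨Finset.mem_univ _, hY⟩
  -- count
  have hcard : (M : ℝ) ^ (N * D)
      ≤ (N.choose K : ℝ) * 2 ^ (M - 1)
        * (2 * Real.exp (-2 * ε ^ 2 * ((K * D : ℕ) : ℝ)) * (M : ℝ) ^ (N * D)) := by
    have h1 : (univ : Finset (Fin N × Fin D → Fin M)).card = M ^ (N * D) := by
      simp [Finset.card_univ]
    have h2 := Finset.card_le_card hcover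
    have h3 := Finset.card_biUnion_le (s := powersetCard K (univ : Finset (Fin N)))
      (t := fun S => ((univ.erase z).powerset).biUnion (fun Y =>
            univ.filter (fun E : Fin N × Fin D → Fin M =>
              ε ≤ |(edgeCount E S Y : ℝ) / ((D : ℝ) * S.card) - (Y.card : ℝ) / M|)))
    have h4 : ∀ S ∈ powersetCard K (univ : Finset (Fin N)),
        ((((univ.erase z).powerset).biUnion (fun Y =>
            univ.filter (fun E : Fin N × Fin D → Fin M =>
              ε ≤ |(edgeCount E S Y : ℝ) / ((D : ℝ) * S.card) - (Y.card : ℝ) / M|))).card : ℝ)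
          ≤ 2 ^ (M - 1) * (2 * Real.exp (-2 * ε ^ 2 * ((K * D : ℕ) : ℝ)) * (M : ℝ) ^ (N * D)) := by
      intro S hS
      rw [Finset.mem_powersetCard] at hS
      have hScard : S.card = K := hS.2
      have hSpos : 0 < S.card := hScard ▸ hK
      calc ((((univ.erase z).powerset).biUnion _).card : ℝ)
          ≤ ((∑ Y ∈ (univ.erase z).powerset,
              (univ.filter (fun E : Fin N × Fin D → Fin M =>
                ε ≤ |(edgeCount E S Y : ℝ) / ((D : ℝ) * S.card) - (Y.card : ℝ) / M|)).card : ℕ) : ℝ) := by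
            exact_mod_cast Finset.card_biUnion_le
        _ = ∑ Y ∈ (univ.erase z).powerset,
              ((univ.filter (fun E : Fin N × Fin D → Fin M =>
                ε ≤ |(edgeCount E S Y : ℝ) / ((D : ℝ) * S.card) - (Y.card : ℝ) / M|)).card : ℝ) := by
            push_cast
            rfl
        _ ≤ ∑ Y ∈ (univ.erase z).powerset,
              (2 * Real.exp (-2 * ε ^ 2 * ((K * D : ℕ) : ℝ)) * (M : ℝ) ^ (N * D)) := by
            apply Finset.sum_le_sum
            intro Y _
            rw [show K * D = S.card * D by rw [hScard]]
            exact count_bad hM hε S Y hSpos hD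
        _ = ((univ.erase z).powerset.card : ℝ)
              * (2 * Real.exp (-2 * ε ^ 2 * ((K * D : ℕ) : ℝ)) * (M : ℝ) ^ (N * D)) := by
            rw [Finset.sum_const, nsmul_eq_mul]
        _ = 2 ^ (M - 1) * (2 * Real.exp (-2 * ε ^ 2 * ((K * D : ℕ) : ℝ)) * (M : ℝ) ^ (N * D)) := by
            congr 1
            rw [Finset.card_powerset, Finset.card_erase_of_mem (Finset.mem_univ z)]
            simp
    calc (M : ℝ) ^ (N * D)
        = (((univ : Finset (Fin N × Fin D → Fin M)).card : ℕ) : ℝ) := by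
          rw [h1]; push_cast; rfl
      _ ≤ (((powersetCard K (univ : Finset (Fin N))).biUnion _).card : ℝ) := by
          exact_mod_cast h2
      _ ≤ ((∑ S ∈ powersetCard K (univ : Finset (Fin N)),
            ((((univ.erase z).powerset).biUnion (fun Y =>
              univ.filter (fun E : Fin N × Fin D → Fin M =>
                ε ≤ |(edgeCount E S Y : ℝ) / ((D : ℝ) * S.card) - (Y.card : ℝ) / M|))).card : ℕ)) : ℝ) := by
          exact_mod_cast h3
      _ = ∑ S ∈ powersetCard K (univ : Finset (Fin N)),
            (((((univ.erase z).powerset).biUnion (fun Y =>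
              univ.filter (fun E : Fin N × Fin D → Fin M =>
                ε ≤ |(edgeCount E S Y : ℝ) / ((D : ℝ) * S.card) - (Y.card : ℝ) / M|))).card : ℕ) : ℝ) := by
          push_cast; rfl
      _ ≤ ∑ S ∈ powersetCard K (univ : Finset (Fin N)),
            (2 ^ (M - 1) * (2 * Real.exp (-2 * ε ^ 2 * ((K * D : ℕ) : ℝ)) * (M : ℝ) ^ (N * D))) :=
          Finset.sum_le_sum h4
      _ = ((powersetCard K (univ : Finset (Fin N))).card : ℝ)
            * (2 ^ (M - 1) * (2 * Real.exp (-2 * ε ^ 2 * ((K * D : ℕ) : ℝ)) * (M : ℝ) ^ (N * D))) := by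
          rw [Finset.sum_const, nsmul_eq_mul]
      _ = (N.choose K : ℝ) * 2 ^ (M - 1)
            * (2 * Real.exp (-2 * ε ^ 2 * ((K * D : ℕ) : ℝ)) * (M : ℝ) ^ (N * D)) := by
          rw [Finset.card_powersetCard]
          simp [mul_assoc]
  -- contradiction with hbound
  have h2M : (2 : ℝ) ^ (M - 1) * 2 = 2 ^ M := by
    rw [← pow_succ]
    congr 1
    omega
  have : (M : ℝ) ^ (N * D)
      ≤ (N.choose K : ℝ) * 2 ^ M * Real.exp (-2 * ε ^ 2 * ((K * D : ℕ) : ℝ))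
        * (M : ℝ) ^ (N * D) := by
    calc (M : ℝ) ^ (N * D)
        ≤ (N.choose K : ℝ) * 2 ^ (M - 1)
          * (2 * Real.exp (-2 * ε ^ 2 * ((K * D : ℕ) : ℝ)) * (M : ℝ) ^ (N * D)) := hcard
      _ = (N.choose K : ℝ) * (2 ^ (M - 1) * 2) * Real.exp (-2 * ε ^ 2 * ((K * D : ℕ) : ℝ))
          * (M : ℝ) ^ (N * D) := by ring
      _ = (N.choose K : ℝ) * 2 ^ M * Real.exp (-2 * ε ^ 2 * ((K * D : ℕ) : ℝ))
          * (M : ℝ) ^ (N * D) := by rw [h2M]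
  linarith [hbound]

lemma key_numeric {N M K D : ℕ} {ε : ℝ} (hε : 0 < ε) (hK : 0 < K) (hKN : K ≤ N)
    (hD1 : (M : ℝ) * Real.log 2 ≤ ε ^ 2 * ((K : ℝ) * D))
    (hD2 : (K : ℝ) * (Real.log ((N : ℝ) / K) + 1) ≤ ε ^ 2 * ((K : ℝ) * D)) :
    (N.choose K : ℝ) * 2 ^ M * Real.exp (-2 * ε ^ 2 * ((K * D : ℕ) : ℝ)) < 1 := by
  have hKr : (0:ℝ) < K := by exact_mod_cast hK
  have hNr : (0:ℝ) < N := by exact_mod_cast (lt_of_lt_of_le hK hKN)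
  have hNK : (1:ℝ) ≤ (N:ℝ)/K := (one_le_div hKr).2 (by exact_mod_cast hKN)
  have hNKpos : (0:ℝ) < (N:ℝ)/K := lt_of_lt_of_le one_pos hNK
  have hFpos : (0:ℝ) < (K.factorial : ℝ) := by exact_mod_cast K.factorial_pos
  have hexpK : (0:ℝ) < Real.exp K := Real.exp_pos _
  -- Step A : K^K < K! * exp K
  have hA : (K:ℝ)^K < (K.factorial : ℝ) * Real.exp K := by
    have hs := Real.sum_le_exp_of_nonneg (le_of_lt hKr) (K+1)
    have hpair : (1:ℝ) + (K:ℝ)^K / (K.factorial : ℝ)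
        ≤ ∑ i ∈ Finset.range (K+1), (K:ℝ)^i / i.factorial := by
      have hsub : ({0, K} : Finset ℕ) ⊆ Finset.range (K+1) := by
        intro i hi
        simp only [Finset.mem_insert, Finset.mem_singleton] at hi
        rcases hi with h|h <;> subst h <;> exact Finset.mem_range.2 (by omega)
      have h := Finset.sum_le_sum_of_subset_of_nonneg
        (f := fun i => (K:ℝ)^i / i.factorial) hsub (fun i _ _ => by positivity)
      rw [Finset.sum_pair (by omega : (0:ℕ) ≠ K)] at h
      simpa using h
    have h1 : (K:ℝ)^K / K.factorial < Real.exp K := by linarith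
    calc (K:ℝ)^K = ((K:ℝ)^K / K.factorial) * K.factorial := by field_simp
      _ < Real.exp K * K.factorial := mul_lt_mul_of_pos_right h1 hFpos
      _ = K.factorial * Real.exp K := by ring
  -- Step B : choose * K! ≤ N^K
  have hB : (N.choose K : ℝ) * K.factorial ≤ (N:ℝ)^K := by
    have h := Nat.descFactorial_le_pow N K
    rw [Nat.descFactorial_eq_factorial_mul_choose] at h
    have : (K.factorial * N.choose K : ℕ) ≤ N ^ K := h
    calc (N.choose K : ℝ) * K.factorial = ((K.factorial * N.choose K : ℕ) : ℝ) := by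
          push_cast; ring
      _ ≤ ((N ^ K : ℕ) : ℝ) := by exact_mod_cast this
      _ = (N:ℝ)^K := by push_cast; ring
  -- Step C : exponent comparison
  have hC : Real.exp (-2 * ε ^ 2 * ((K * D : ℕ) : ℝ))
      ≤ Real.exp (-((M:ℝ) * Real.log 2 + ((K:ℝ) * Real.log ((N:ℝ)/K) + (K:ℝ)))) := by
    apply Real.exp_le_exp.2
    rw [mul_add, mul_one] at hD2
    push_cast
    nlinarith [hD1, hD2]
  -- Step D : value of the exponential
  set Q : ℝ := ((N:ℝ)/K)^K * Real.exp K with hQ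
  have hQpos : 0 < Q := by positivity
  have hD' : Real.exp (-((M:ℝ) * Real.log 2 + ((K:ℝ) * Real.log ((N:ℝ)/K) + (K:ℝ))))
      = ((2:ℝ)^M * Q)⁻¹ := by
    rw [Real.exp_neg, Real.exp_add, Real.exp_add]
    congr 2
    · rw [Real.exp_nat_mul, Real.exp_log two_pos]
    · rw [hQ]
      congr 1
      rw [Real.exp_nat_mul, Real.exp_log hNKpos]
  -- combine
  have hchQ : (N.choose K : ℝ) < Q := by
    rw [hQ, div_pow, div_mul_eq_mul_div, lt_div_iff₀ (pow_pos hKr K)]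
    nlinarith [mul_le_mul_of_nonneg_right hB (pow_nonneg hKr.le K),
      mul_lt_mul_of_pos_left hA (pow_pos hNr K), hFpos]
  calc (N.choose K : ℝ) * 2 ^ M * Real.exp (-2 * ε ^ 2 * ((K * D : ℕ) : ℝ))
      ≤ (N.choose K : ℝ) * 2 ^ M * ((2:ℝ)^M * Q)⁻¹ := by
        apply mul_le_mul_of_nonneg_left _ (by positivity)
        rw [← hD']
        exact hC
    _ = (N.choose K : ℝ) / Q := by
        rw [mul_inv]
        field_simp
    _ < 1 := (div_lt_one hQpos).2 hchQ

lemma card_powersetCard_filter_mem {α : Type*} [DecidableEq α] (S : Finset α) (K : ℕ)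
    (x : α) (hx : x ∈ S) (hK : 0 < K) :
    ((S.powersetCard K).filter (fun T => x ∈ T)).card = (S.card - 1).choose (K - 1) := by
  have h : ((S.powersetCard K).filter (fun T => x ∈ T)).card
      = ((S.erase x).powersetCard (K - 1)).card := by
    refine Finset.card_bij' (fun T _ => T.erase x) (fun U _ => insert x U)
      ?_ ?_ ?_ ?_
    · intro T hT
      rw [Finset.mem_filter, Finset.mem_powersetCard] at hT
      rw [Finset.mem_powersetCard]
      constructor
      · exact Finset.erase_subset_erase x hT.1.1
      · rw [Finset.card_erase_of_mem hT.2, hT.1.2]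
    · intro U hU
      rw [Finset.mem_powersetCard] at hU
      rw [Finset.mem_filter, Finset.mem_powersetCard]
      have hxU : x ∉ U := fun h => (Finset.mem_erase.1 (hU.1 h)).1 rfl
      refine ⟨⟨?_, ?_⟩, Finset.mem_insert_self x U⟩
      · apply Finset.insert_subset hx
        exact hU.1.trans (Finset.erase_subset x S)
      · rw [Finset.card_insert_of_notMem hxU, hU.2]
        omega
    · intro T hT
      rw [Finset.mem_filter] at hT
      exact Finset.insert_erase hT.2
    · intro U hU
      rw [Finset.mem_powersetCard] at hU
      have hxU : x ∉ U := fun h => (Finset.mem_erase.1 (hU.1 h)).1 rfl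
      exact Finset.erase_insert hxU
  rw [h, Finset.card_powersetCard, Finset.card_erase_of_mem hx]

lemma edgeCount_eq_sum {N D M : ℕ} (E : Fin N × Fin D → Fin M)
    (T : Finset (Fin N)) (Y : Finset (Fin M)) :
    edgeCount E T Y = ∑ x ∈ T, (univ.filter (fun i : Fin D => E (x, i) ∈ Y)).card := by
  unfold edgeCount
  rw [Finset.card_filter, Finset.sum_product]
  refine Finset.sum_congr rfl (fun x _ => ?_)
  rw [Finset.card_filter]

lemma sum_powersetCard_edgeCount {N D M : ℕ} (E : Fin N × Fin D → Fin M)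
    (S : Finset (Fin N)) (Y : Finset (Fin M)) (K : ℕ) (hK : 0 < K) :
    ∑ T ∈ S.powersetCard K, edgeCount E T Y
      = (S.card - 1).choose (K - 1) * edgeCount E S Y := by
  classical
  set c : Fin N → ℕ := fun x => (univ.filter (fun i : Fin D => E (x, i) ∈ Y)).card with hc
  calc ∑ T ∈ S.powersetCard K, edgeCount E T Y
      = ∑ T ∈ S.powersetCard K, ∑ x ∈ T, c x :=
        Finset.sum_congr rfl (fun T _ => edgeCount_eq_sum E T Y)
    _ = ∑ T ∈ S.powersetCard K, ∑ x ∈ S, if x ∈ T then c x else 0 := by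
        refine Finset.sum_congr rfl (fun T hT => ?_)
        rw [Finset.mem_powersetCard] at hT
        rw [← Finset.sum_filter]
        congr 1
        rw [Finset.filter_mem_eq_inter, Finset.inter_eq_right.2 hT.1]
    _ = ∑ x ∈ S, ∑ T ∈ S.powersetCard K, if x ∈ T then c x else 0 := Finset.sum_comm
    _ = ∑ x ∈ S, (S.card - 1).choose (K - 1) * c x := by
        refine Finset.sum_congr rfl (fun x hx => ?_)
        rw [← Finset.sum_filter, Finset.sum_const, smul_eq_mul,
          card_powersetCard_filter_mem S K x hx hK]
    _ = (S.card - 1).choose (K - 1) * ∑ x ∈ S, c x := by rw [Finset.mul_sum]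
    _ = (S.card - 1).choose (K - 1) * edgeCount E S Y := by
        rw [← edgeCount_eq_sum]

lemma good_implies_extractor {N D M K : ℕ} (hM : 0 < M) {ε : ℝ}
    (hK : 0 < K) (hD : 0 < D) (E : Fin N × Fin D → Fin M)
    (hgood : ∀ S : Finset (Fin N), S.card = K → ∀ Y : Finset (Fin M),
        |(edgeCount E S Y : ℝ) / ((D : ℝ) * S.card) - (Y.card : ℝ) / M| < ε) :
    ∀ (S : Finset (Fin N)) (Y : Finset (Fin M)), K ≤ S.card →
      |(edgeCount E S Y : ℝ) / ((D : ℝ) * S.card) - (Y.card : ℝ) / M| < ε := by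
  classical
  intro S Y hKS
  have hspos : 0 < S.card := lt_of_lt_of_le hK hKS
  have hDr : (0:ℝ) < D := by exact_mod_cast hD
  have hsr : (0:ℝ) < (S.card:ℝ) := by exact_mod_cast hspos
  have hKr : (0:ℝ) < (K:ℝ) := by exact_mod_cast hK
  set P := S.powersetCard K with hP
  have hPcard : P.card = S.card.choose K := by rw [hP, Finset.card_powersetCard]
  have hPpos : 0 < P.card := by rw [hPcard]; exact Nat.choose_pos hKS
  have hPr : (0:ℝ) < (P.card : ℝ) := by exact_mod_cast hPpos
  have hPne : P.Nonempty := Finset.card_pos.1 hPpos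
  have hsum := sum_powersetCard_edgeCount E S Y K hK
  have hid : (S.card - 1).choose (K - 1) * S.card = P.card * K := by
    rw [hPcard]
    have h := Nat.add_one_mul_choose_eq (S.card - 1) (K - 1)
    have h1 : S.card - 1 + 1 = S.card := by omega
    have h2 : K - 1 + 1 = K := by omega
    rw [h1, h2] at h
    rw [mul_comm]
    exact h
  have hidr : (((S.card - 1).choose (K - 1)) : ℝ) * S.card = (P.card : ℝ) * K := by
    exact_mod_cast hid
  have key : ∑ T ∈ P, ((edgeCount E T Y : ℝ) / ((D:ℝ) * K) - (Y.card : ℝ) / M)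
      = (P.card : ℝ) * ((edgeCount E S Y : ℝ) / ((D:ℝ) * S.card) - (Y.card : ℝ) / M) := by
    rw [Finset.sum_sub_distrib, ← Finset.sum_div, Finset.sum_const, nsmul_eq_mul]
    have hcast : ∑ T ∈ P, (edgeCount E T Y : ℝ)
        = (((S.card - 1).choose (K - 1)) : ℝ) * edgeCount E S Y := by
      rw [← Nat.cast_sum]
      exact_mod_cast hsum
    rw [hcast, mul_sub]
    congr 1
    rw [← mul_div_assoc, div_eq_div_iff (by positivity) (by positivity)]
    linear_combination ((D:ℝ) * (edgeCount E S Y : ℝ)) * hidr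
  have habs : (P.card : ℝ)
      * |(edgeCount E S Y : ℝ) / ((D:ℝ) * S.card) - (Y.card : ℝ) / M|
      < (P.card : ℝ) * ε := by
    calc (P.card : ℝ) * |(edgeCount E S Y : ℝ) / ((D:ℝ) * S.card) - (Y.card : ℝ) / M|
        = |(P.card : ℝ) * ((edgeCount E S Y : ℝ) / ((D:ℝ) * S.card) - (Y.card : ℝ) / M)| := by
          rw [abs_mul, abs_of_nonneg hPr.le]
      _ = |∑ T ∈ P, ((edgeCount E T Y : ℝ) / ((D:ℝ) * K) - (Y.card : ℝ) / M)| := by rw [key]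
      _ ≤ ∑ T ∈ P, |(edgeCount E T Y : ℝ) / ((D:ℝ) * K) - (Y.card : ℝ) / M| :=
          Finset.abs_sum_le_sum_abs _ _
      _ < ∑ _T ∈ P, ε := by
          apply Finset.sum_lt_sum_of_nonempty hPne
          intro T hT
          rw [hP, Finset.mem_powersetCard] at hT
          have := hgood T hT.2 Y
          rwa [hT.2] at this
      _ = (P.card : ℝ) * ε := by rw [Finset.sum_const, nsmul_eq_mul]
  exact lt_of_mul_lt_mul_left habs hPr.le


/-- For all `K, N, M, ε` with `1 < K ≤ N`, `M > 0`, `ε > 0`, there exists a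
`(K, ε)`-extractor with left degree
`D = ⌈max{(M/K)·ln 2/ε², (1/ε²)(ln(N/K) + 1)}⌉`. -/
theorem extractor_exists (K N M : ℕ) (ε : ℝ)
    (hK : 1 < K) (hKN : K ≤ N) (hM : 0 < M) (hε : 0 < ε) :
    ∃ E : Fin N ×
        Fin (⌈max (((M : ℝ) / K) * Real.log 2 / ε ^ 2)
              ((1 / ε ^ 2) * (Real.log ((N : ℝ) / K) + 1))⌉₊) → Fin M,
      IsExtractor E K ε := by
  classical
  set D : ℕ := ⌈max (((M : ℝ) / K) * Real.log 2 / ε ^ 2)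
      ((1 / ε ^ 2) * (Real.log ((N : ℝ) / K) + 1))⌉₊ with hDdef
  have hK0 : 0 < K := lt_trans one_pos hK
  have hKr : (0:ℝ) < K := by exact_mod_cast hK0
  have hNK1 : (1:ℝ) ≤ (N:ℝ)/K := (one_le_div hKr).2 (by exact_mod_cast hKN)
  have hlogNK : 0 ≤ Real.log ((N:ℝ)/K) := Real.log_nonneg hNK1
  have hbpos : 0 < (1 / ε ^ 2) * (Real.log ((N:ℝ)/K) + 1) := by positivity
  have hD : 0 < D := by
    rw [hDdef]
    rw [Nat.ceil_pos]
    exact lt_of_lt_of_le hbpos (le_max_right _ _)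
  have ha : ((M:ℝ)/K) * Real.log 2 / ε ^ 2 ≤ (D:ℝ) :=
    le_trans (le_max_left _ _) (Nat.le_ceil _)
  have hb : (1 / ε ^ 2) * (Real.log ((N:ℝ)/K) + 1) ≤ (D:ℝ) :=
    le_trans (le_max_right _ _) (Nat.le_ceil _)
  have hD1 : (M:ℝ) * Real.log 2 ≤ ε ^ 2 * ((K:ℝ) * D) := by
    rw [div_le_iff₀ (by positivity)] at ha
    calc (M:ℝ) * Real.log 2 = (K:ℝ) * ((M:ℝ)/K * Real.log 2) := by field_simp
      _ ≤ (K:ℝ) * ((D:ℝ) * ε ^ 2) := mul_le_mul_of_nonneg_left ha hKr.le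
      _ = ε ^ 2 * ((K:ℝ) * D) := by ring
  have hD2 : (K:ℝ) * (Real.log ((N:ℝ)/K) + 1) ≤ ε ^ 2 * ((K:ℝ) * D) := by
    have h1 : Real.log ((N:ℝ)/K) + 1 ≤ ε ^ 2 * D := by
      have h2 := mul_le_mul_of_nonneg_left hb (by positivity : (0:ℝ) ≤ ε ^ 2)
      rwa [show ε ^ 2 * ((1 / ε ^ 2) * (Real.log ((N:ℝ)/K) + 1))
          = Real.log ((N:ℝ)/K) + 1 from by field_simp] at h2
    calc (K:ℝ) * (Real.log ((N:ℝ)/K) + 1) ≤ (K:ℝ) * (ε ^ 2 * D) :=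
          mul_le_mul_of_nonneg_left h1 hKr.le
      _ = ε ^ 2 * ((K:ℝ) * D) := by ring
  have hnum := key_numeric (N := N) (M := M) (K := K) (D := D) hε hK0 hKN hD1 hD2
  have hMND : (0:ℝ) < (M:ℝ) ^ (N * D) := by
    have : (0:ℝ) < M := by exact_mod_cast hM
    positivity
  have hbound : (N.choose K : ℝ) * 2 ^ M * Real.exp (-2 * ε ^ 2 * ((K * D : ℕ) : ℝ))
      * (M : ℝ) ^ (N * D) < (M : ℝ) ^ (N * D) := by
    calc (N.choose K : ℝ) * 2 ^ M * Real.exp (-2 * ε ^ 2 * ((K * D : ℕ) : ℝ))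
        * (M : ℝ) ^ (N * D) < 1 * (M : ℝ) ^ (N * D) :=
          mul_lt_mul_of_pos_right hnum hMND
      _ = (M : ℝ) ^ (N * D) := one_mul _
  obtain ⟨E, hE⟩ := exists_good (N := N) (D := D) (M := M) (K := K) hM hε hK0 hD hbound
  exact ⟨E, good_implies_extractor hM hK0 hD E hE⟩
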